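/- Let ν be a real number with ν > -1/2 and let z > 0. Then ∫_1^∞ e^{-z·x} (x² - 1)^{ν - 1/2} x dx = (2^ν / √π) · Γ(ν + 1/2) · z^{-ν} · K_{ν+1}(z). -/

import Mathlib

open MeasureTheory Real Set

/-- Modified Bessel function of the second kind. -/
noncomputable def besselK (ν z : ℝ) : ℝ :=
  ∫ t in Ioi (0:ℝ), Real.exp (-z * Real.cosh t) * Real.cosh (ν * t)

lemma glasser {c : ℝ} (hc : 0 < c) :
    ∫ s in Ioi (0:ℝ), Real.exp (-(s - c/s)^2) = Real.sqrt π / 2 := by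
  set G : ℝ → ℝ := fun u => Real.exp (-u^2) with hG
  -- main change of variables h s = s - c/s
  have hderiv : ∀ s ∈ Ioi (0:ℝ), HasDerivWithinAt (fun s => s - c/s) (1 + c/s^2) (Ioi 0) s := by
    intro s hs
    have hs0 : s ≠ 0 := ne_of_gt hs
    have : HasDerivAt (fun s : ℝ => s - c/s) (1 + c/s^2) s := by
      have h1 : HasDerivAt (fun s : ℝ => c / s) (c * (-(s^2)⁻¹)) s := by
        simpa [div_eq_mul_inv] using (hasDerivAt_inv hs0).const_mul c
      have := (hasDerivAt_id s).sub h1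
      refine this.congr_deriv ?_
      ring
    exact this.hasDerivWithinAt
  have hinj : InjOn (fun s => s - c/s) (Ioi (0:ℝ)) := by
    have : StrictMonoOn (fun s => s - c/s) (Ioi (0:ℝ)) := by
      intro a ha b hb hab
      exact sub_lt_sub hab (div_lt_div_of_pos_left hc ha hab)
    exact this.injOn
  have himg : (fun s => s - c/s) '' (Ioi (0:ℝ)) = univ := by
    apply eq_univ_of_forall
    intro y
    set r := Real.sqrt (y^2 + 4*c) with hrdef
    have hr2 : r^2 = y^2 + 4*c := Real.sq_sqrt (by positivity)
    have hr0 : 0 ≤ r := Real.sqrt_nonneg _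
    have hs : 0 < (y + r)/2 := by nlinarith [sq_nonneg (r + y), sq_nonneg (r - y)]
    refine ⟨(y + r)/2, hs, ?_⟩
    have hyr : y + r ≠ 0 := by
      intro h; rw [h] at hs; simp at hs
    show (y+r)/2 - c/((y+r)/2) = y
    field_simp
    nlinarith [hr2]
  have hCoV := integral_image_eq_integral_abs_deriv_smul measurableSet_Ioi hderiv hinj G
  rw [himg, Measure.restrict_univ] at hCoV
  have hgauss : ∫ u : ℝ, G u = Real.sqrt π := by
    have := integral_gaussian (1:ℝ)
    simpa using this
  -- the involution g s = c/s
  have hderiv2 : ∀ s ∈ Ioi (0:ℝ), HasDerivWithinAt (fun s => c/s) (-(c/s^2)) (Ioi 0) s := by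
    intro s hs
    have hs0 : s ≠ 0 := ne_of_gt hs
    have : HasDerivAt (fun s : ℝ => c / s) (c * (-(s^2)⁻¹)) s := by
      simpa [div_eq_mul_inv] using (hasDerivAt_inv hs0).const_mul c
    refine this.hasDerivWithinAt.congr_deriv ?_
    field_simp
  have hinj2 : InjOn (fun s => c/s) (Ioi (0:ℝ)) := by
    intro a ha b hb hab
    simp only at hab
    have ha0 : a ≠ 0 := ne_of_gt ha
    have hb0 : b ≠ 0 := ne_of_gt hb
    field_simp at hab
    linarith
  have himg2 : (fun s => c/s) '' (Ioi (0:ℝ)) = Ioi (0:ℝ) := by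
    ext y
    constructor
    · rintro ⟨s, hs, rfl⟩
      exact div_pos hc hs
    · intro hy
      exact ⟨c/y, div_pos hc hy, by field_simp⟩
  set F : ℝ → ℝ := fun s => Real.exp (-(s - c/s)^2) with hFdef
  have hCoV2 := integral_image_eq_integral_abs_deriv_smul measurableSet_Ioi hderiv2 hinj2 F
  rw [himg2] at hCoV2
  -- rewrite the RHS of hCoV2: F (c/s) = F s for s > 0
  have hFeq : ∀ s ∈ Ioi (0:ℝ), |(-(c/s^2))| • F (c/s) = (c/s^2) * F s := by
    intro s hs
    have hs0 : s ≠ 0 := ne_of_gt hs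
    have h1 : c/(c/s) = s := by field_simp
    have h2 : |(-(c/s^2))| = c/s^2 := by
      rw [abs_neg, abs_of_pos (by positivity)]
    rw [h2, smul_eq_mul, hFdef]
    simp only
    rw [h1]
    congr 2
    ring
  rw [setIntegral_congr_fun measurableSet_Ioi hFeq] at hCoV2
  -- hCoV2 : ∫ s in Ioi 0, F s = ∫ s in Ioi 0, (c/s^2) * F s
  -- hCoV : √π = ∫ s in Ioi 0, |1 + c/s^2| • G (s - c/s) = ∫ (F s + (c/s^2) * F s)
  have hsum : ∀ s ∈ Ioi (0:ℝ), |1 + c/s^2| • G (s - c/s) = F s + (c/s^2) * F s := by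
    intro s hs
    have hpos : (0:ℝ) < 1 + c/s^2 := by positivity
    rw [abs_of_pos hpos, smul_eq_mul, hG, hFdef]
    ring
  rw [setIntegral_congr_fun measurableSet_Ioi hsum] at hCoV
  -- integrability
  have hint : IntegrableOn (fun s => F s + (c/s^2) * F s) (Ioi (0:ℝ)) := by
    have hGi : Integrable G := by
      simpa [hG] using integrable_exp_neg_mul_sq one_pos
    have := (integrableOn_image_iff_integrableOn_abs_deriv_smul measurableSet_Ioi hderiv hinj G).mp
      (by rw [himg]; exact hGi.integrableOn)
    exact this.congr_fun hsum measurableSet_Ioi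
  have hFm : Measurable F := by
    have h1 : Measurable fun s : ℝ => s - c/s :=
      measurable_id.sub (measurable_const.div measurable_id)
    exact ((h1.pow_const 2).neg).exp
  have hFnn : ∀ s, 0 ≤ F s := fun s => le_of_lt (Real.exp_pos _)
  have hint1 : IntegrableOn F (Ioi (0:ℝ)) := by
    refine hint.mono' hFm.aestronglyMeasurable ?_
    filter_upwards [self_mem_ae_restrict measurableSet_Ioi] with s hs
    have h1 : 0 ≤ c/s^2 * F s := by
      have : (0:ℝ) < s := hs
      positivity
    rw [Real.norm_eq_abs, abs_of_nonneg (hFnn s)]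
    linarith
  have hint2 : IntegrableOn (fun s => c/s^2 * F s) (Ioi (0:ℝ)) := by
    have h : IntegrableOn ((fun s => F s + c/s^2 * F s) - F) (Ioi (0:ℝ)) := hint.sub hint1
    refine h.congr_fun (fun s _ => ?_) measurableSet_Ioi
    simp [Pi.sub_apply]
  rw [integral_add hint1 hint2, ← hCoV2, hgauss] at hCoV
  linarith

lemma subord {a : ℝ} (ha : 0 < a) :
    ∫ t in Ioi (0:ℝ), Real.exp (-t - a^2/(4*t)) * t ^ (-(1:ℝ)/2)
      = Real.sqrt π * Real.exp (-a) := by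
  set g : ℝ → ℝ := fun t => Real.exp (-t - a^2/(4*t)) * t ^ (-(1:ℝ)/2) with hg
  have hderiv : ∀ s ∈ Ioi (0:ℝ), HasDerivWithinAt (fun s : ℝ => s^2) (2*s) (Ioi 0) s := by
    intro s _
    simpa using (hasDerivAt_pow 2 s).hasDerivWithinAt
  have hinj : InjOn (fun s : ℝ => s^2) (Ioi (0:ℝ)) := by
    intro x hx y hy h
    have := congrArg Real.sqrt h
    rwa [Real.sqrt_sq_eq_abs, Real.sqrt_sq_eq_abs, abs_of_pos hx, abs_of_pos hy] at this
  have himg : (fun s : ℝ => s^2) '' (Ioi (0:ℝ)) = Ioi (0:ℝ) := by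
    ext y
    constructor
    · rintro ⟨s, hs, rfl⟩
      exact pow_pos (show (0:ℝ) < s from hs) 2
    · intro hy
      exact ⟨Real.sqrt y, Real.sqrt_pos.mpr hy, Real.sq_sqrt hy.le⟩
  have hCoV := integral_image_eq_integral_abs_deriv_smul measurableSet_Ioi hderiv hinj g
  rw [himg] at hCoV
  have hpt : ∀ s ∈ Ioi (0:ℝ), |2*s| • g (s^2)
      = (2 * Real.exp (-a)) * Real.exp (-(s - (a/2)/s)^2) := by
    intro s hs
    have hs0 : (0:ℝ) < s := hs
    have h1 : ((s^2 : ℝ)) ^ (-(1:ℝ)/2) = s⁻¹ := by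
      rw [← Real.rpow_natCast s 2, ← Real.rpow_mul hs0.le]
      norm_num
      exact Real.rpow_neg_one s
    have h2 : |2*s| = 2*s := abs_of_pos (by linarith)
    rw [smul_eq_mul, h2, hg]
    simp only
    rw [h1]
    rw [show -(s^2) - a^2/(4*s^2) = -(s - (a/2)/s)^2 + -a by field_simp; ring, Real.exp_add]
    field_simp
  rw [setIntegral_congr_fun measurableSet_Ioi hpt, integral_const_mul, glasser (by linarith : (0:ℝ) < a/2)] at hCoV
  rw [hCoV]
  ring

lemma g2_integrable {z ν : ℝ} (hz : 0 < z) (hν : -1 < ν) :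
    IntegrableOn (fun t => Real.exp (-t - z^2/(4*t)) * t ^ ν) (Ioi (0:ℝ)) := by
  have hg : IntegrableOn (fun t : ℝ => Real.exp (-t) * t ^ ((ν+1) - 1)) (Ioi (0:ℝ)) :=
    Real.GammaIntegral_convergent (by linarith)
  have hm : Measurable fun t : ℝ => Real.exp (-t - z^2/(4*t)) * t ^ ν := by fun_prop
  refine hg.mono' hm.aestronglyMeasurable ?_
  filter_upwards [self_mem_ae_restrict measurableSet_Ioi] with t ht
  have ht0 : (0:ℝ) < t := ht
  rw [Real.norm_eq_abs, abs_of_nonneg (by positivity)]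
  have h1 : Real.exp (-t - z^2/(4*t)) ≤ Real.exp (-t) := by
    apply Real.exp_le_exp.mpr
    have : 0 ≤ z^2/(4*t) := by positivity
    linarith
  have h2 : (0:ℝ) ≤ t ^ ν := by positivity
  calc Real.exp (-t - z^2/(4*t)) * t ^ ν ≤ Real.exp (-t) * t ^ ν :=
        mul_le_mul_of_nonneg_right h1 h2
    _ = Real.exp (-t) * t ^ ((ν+1)-1) := by norm_num

lemma expCoV {z μ : ℝ} (hz : 0 < z) :
    ∫ t in Ioi (0:ℝ), Real.exp (-t - z^2/(4*t)) * t ^ μ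
      = (z/2)^(μ+1) * ∫ s : ℝ, Real.exp (-z * Real.cosh s) * Real.exp ((μ+1) * s) := by
  set g : ℝ → ℝ := fun t => Real.exp (-t - z^2/(4*t)) * t ^ μ with hgdef
  have hderiv : ∀ s ∈ (univ : Set ℝ),
      HasDerivWithinAt (fun s : ℝ => (z/2) * Real.exp s) ((z/2) * Real.exp s) univ s := by
    intro s _
    exact ((Real.hasDerivAt_exp s).const_mul (z/2)).hasDerivWithinAt
  have hinj : InjOn (fun s : ℝ => (z/2) * Real.exp s) univ := by
    intro a _ b _ h
    simp only at h
    have := mul_left_cancel₀ (by positivity : (z:ℝ)/2 ≠ 0) h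
    exact Real.exp_injective this
  have himg : (fun s : ℝ => (z/2) * Real.exp s) '' univ = Ioi (0:ℝ) := by
    rw [image_univ]
    ext y
    constructor
    · rintro ⟨s, rfl⟩
      exact mul_pos (by positivity) (Real.exp_pos s)
    · intro hy
      have hy0 : (0:ℝ) < y := hy
      refine ⟨Real.log (y / (z/2)), ?_⟩
      show z/2 * Real.exp (Real.log (y / (z/2))) = y
      rw [Real.exp_log (by positivity)]
      field_simp
  have hCoV := integral_image_eq_integral_abs_deriv_smul MeasurableSet.univ hderiv hinj g
  rw [himg, Measure.restrict_univ] at hCoV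
  rw [hCoV]
  rw [← integral_const_mul]
  congr 1
  ext s
  have he : (0:ℝ) < Real.exp s := Real.exp_pos s
  have h1 : ((z/2) * Real.exp s : ℝ) ^ μ = (z/2)^μ * Real.exp (μ * s) := by
    rw [Real.mul_rpow (by positivity) he.le]
    congr 1
    rw [Real.rpow_def_of_pos he, Real.log_exp]
    ring_nf
  have h2 : -((z/2) * Real.exp s) - z^2/(4*((z/2) * Real.exp s)) = -z * Real.cosh s := by
    rw [Real.cosh_eq]
    rw [Real.exp_neg]
    field_simp
    ring
  rw [smul_eq_mul, hgdef]
  simp only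
  rw [h1, h2, abs_of_pos (by positivity)]
  rw [show (μ+1) * s = μ * s + s by ring, Real.exp_add]
  rw [Real.rpow_add (by positivity) μ 1, Real.rpow_one]
  ring

lemma coshInt {μ z : ℝ}
    (hi : Integrable (fun s : ℝ => Real.exp (-z * Real.cosh s) * Real.exp (μ * s))) :
    ∫ s : ℝ, Real.exp (-z * Real.cosh s) * Real.exp (μ * s) = 2 * besselK μ z := by
  set f : ℝ → ℝ := fun s => Real.exp (-z * Real.cosh s) * Real.exp (μ * s) with hf
  have hsplit : (∫ s in Iic (0:ℝ), f s) + (∫ s in Ioi (0:ℝ), f s) = ∫ s : ℝ, f s :=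
    intervalIntegral.integral_Iic_add_Ioi hi.integrableOn hi.integrableOn
  have hneg : ∫ s in Iic (0:ℝ), f s = ∫ s in Ioi (0:ℝ), f (-s) := by
    rw [integral_comp_neg_Ioi, neg_zero]
  have hcompneg : IntegrableOn (fun s => f (-s)) (Ioi (0:ℝ)) := hi.comp_neg.integrableOn
  rw [← hsplit, hneg, ← integral_add hcompneg hi.integrableOn]
  rw [show (2:ℝ) * besselK μ z = ∫ t in Ioi (0:ℝ), 2 * (Real.exp (-z * Real.cosh t) * Real.cosh (μ * t)) by
    rw [integral_const_mul, besselK]]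
  apply setIntegral_congr_fun measurableSet_Ioi
  intro s _
  simp only [hf]
  rw [Real.cosh_neg, show μ * -s = -(μ * s) by ring, Real.cosh_eq (μ * s)]
  ring

lemma f_integrable {z μ : ℝ} (hz : 0 < z) (hμ : -1 < μ) :
    Integrable (fun s : ℝ => Real.exp (-z * Real.cosh s) * Real.exp ((μ+1) * s)) := by
  set g : ℝ → ℝ := fun t => Real.exp (-t - z^2/(4*t)) * t ^ μ with hgdef
  have hderiv : ∀ s ∈ (univ : Set ℝ),
      HasDerivWithinAt (fun s : ℝ => (z/2) * Real.exp s) ((z/2) * Real.exp s) univ s := by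
    intro s _
    exact ((Real.hasDerivAt_exp s).const_mul (z/2)).hasDerivWithinAt
  have hinj : InjOn (fun s : ℝ => (z/2) * Real.exp s) univ := by
    intro a _ b _ h
    simp only at h
    have := mul_left_cancel₀ (by positivity : (z:ℝ)/2 ≠ 0) h
    exact Real.exp_injective this
  have himg : (fun s : ℝ => (z/2) * Real.exp s) '' univ = Ioi (0:ℝ) := by
    rw [image_univ]
    ext y
    constructor
    · rintro ⟨s, rfl⟩
      exact mul_pos (by positivity) (Real.exp_pos s)
    · intro hy
      have hy0 : (0:ℝ) < y := hy
      refine ⟨Real.log (y / (z/2)), ?_⟩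
      show z/2 * Real.exp (Real.log (y / (z/2))) = y
      rw [Real.exp_log (by positivity)]
      field_simp
  have h1 := (integrableOn_image_iff_integrableOn_abs_deriv_smul MeasurableSet.univ hderiv hinj g).mp
    (by rw [himg]; exact g2_integrable hz hμ)
  rw [← integrableOn_univ]
  have h2 : IntegrableOn
      (fun s : ℝ => (z/2)^(μ+1) * (Real.exp (-z * Real.cosh s) * Real.exp ((μ+1) * s))) univ := by
    refine h1.congr_fun (fun s _ => ?_) MeasurableSet.univ
    have he : (0:ℝ) < Real.exp s := Real.exp_pos s
    have hpt : ((z/2) * Real.exp s : ℝ) ^ μ = (z/2)^μ * Real.exp (μ * s) := by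
      rw [Real.mul_rpow (by positivity) he.le]
      congr 1
      rw [Real.rpow_def_of_pos he, Real.log_exp]
      ring_nf
    have h2' : -((z/2) * Real.exp s) - z^2/(4*((z/2) * Real.exp s)) = -z * Real.cosh s := by
      rw [Real.cosh_eq, Real.exp_neg]
      field_simp
      ring
    beta_reduce
    rw [smul_eq_mul, hgdef]
    simp only
    rw [hpt, h2', abs_of_pos (by positivity)]
    rw [show (μ+1) * s = μ * s + s by ring, Real.exp_add]
    rw [Real.rpow_add (by positivity) μ 1, Real.rpow_one]
    ring
  have h3 : IntegrableOn
      (fun s : ℝ => ((z/2)^(μ+1) : ℝ)⁻¹ * ((z/2)^(μ+1) * (Real.exp (-z * Real.cosh s) * Real.exp ((μ+1) * s)))) univ :=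
    h2.const_mul ((z/2)^(μ+1) : ℝ)⁻¹
  refine h3.congr_fun (fun s _ => ?_) MeasurableSet.univ
  have h4 : ((z/2 : ℝ)^(μ+1)) ≠ 0 := by positivity
  field_simp

lemma rpowExpInt {a r : ℝ} (ha : 0 < a) (hr : 0 < r) :
    IntegrableOn (fun u : ℝ => u ^ (a-1) * Real.exp (-(r*u))) (Ioi (0:ℝ)) := by
  by_contra hcon
  have h0 : (∫ u in Ioi (0:ℝ), u ^ (a-1) * Real.exp (-(r*u))) = 0 := integral_undef hcon
  rw [Real.integral_rpow_mul_exp_neg_mul_Ioi ha hr] at h0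
  have h1 : (0:ℝ) < (1/r)^a * Real.Gamma a := by
    have := Real.Gamma_pos_of_pos ha
    positivity
  linarith

theorem stmt0 (ν z : ℝ) (hν : ν > -1/2) (hz : z > 0) :
    ∫ x in Ioi (1:ℝ), Real.exp (-z * x) * (x ^ 2 - 1) ^ (ν - 1/2) * x
      = 2 ^ ν / Real.sqrt π * Real.Gamma (ν + 1/2) * z ^ (-ν) * besselK (ν + 1) z := by
  have hν2 : (0:ℝ) < ν + 1/2 := by linarith
  have hν1 : (-1:ℝ) < ν := by linarith
  set g1 : ℝ → ℝ := fun x => Real.exp (-z * x) * (x ^ 2 - 1) ^ (ν - 1/2) * x with hg1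
  set g2 : ℝ → ℝ := fun t => Real.exp (-t - z^2/(4*t)) * t ^ ν with hg2
  set F : ℝ → ℝ → ℝ := fun t x =>
    Real.exp (-t - (z*x)^2/(4*t)) * t ^ (-(1:ℝ)/2) * ((x^2-1) ^ (ν - 1/2) * x) with hFdef
  set C2 : ℝ := Real.Gamma (ν+1/2) / 2 * (4/z^2)^(ν+1/2) with hC2
  have hΓpos : 0 < Real.Gamma (ν+1/2) := Real.Gamma_pos_of_pos hν2
  have hC2nn : 0 ≤ C2 := by rw [hC2]; positivity
  -- pointwise nonnegativity
  have hFnnx : ∀ x ∈ Ioi (1:ℝ), ∀ t ∈ Ioi (0:ℝ), 0 ≤ F t x := by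
    intro x hx t ht
    have hx1 : (1:ℝ) < x := hx
    have ht0 : (0:ℝ) < t := ht
    have h1 : (0:ℝ) ≤ x^2 - 1 := by nlinarith
    rw [hFdef]
    have h2 : (0:ℝ) ≤ t ^ (-(1:ℝ)/2) := Real.rpow_nonneg ht0.le _
    have h3 : (0:ℝ) ≤ (x^2-1) ^ (ν - 1/2) := Real.rpow_nonneg h1 _
    positivity
  -- inner integral in t
  have hsubint : ∀ x ∈ Ioi (1:ℝ), IntegrableOn (fun t => F t x) (Ioi (0:ℝ)) := by
    intro x hx
    have hx1 : (1:ℝ) < x := hx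
    have hzx : 0 < z * x := by positivity
    have := (g2_integrable (z := z*x) (ν := -(1:ℝ)/2) hzx (by norm_num)).mul_const
      ((x^2-1) ^ (ν - 1/2) * x)
    exact this
  have hinnerT : ∀ x ∈ Ioi (1:ℝ), ∫ t in Ioi (0:ℝ), F t x = Real.sqrt π * g1 x := by
    intro x hx
    have hx1 : (1:ℝ) < x := hx
    have hzx : 0 < z * x := by positivity
    rw [hFdef]
    simp only
    rw [integral_mul_const, subord hzx, hg1]
    simp only
    rw [show -(z*x) = -z*x by ring]
    ring
  -- inner integral in x
  have hCoVx : ∀ t ∈ Ioi (0:ℝ), True := fun _ _ => trivial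
  have hderivx : ∀ x ∈ Ioi (1:ℝ), HasDerivWithinAt (fun x : ℝ => x^2 - 1) (2*x) (Ioi 1) x := by
    intro x _
    have := ((hasDerivAt_pow 2 x).sub_const 1)
    simpa using this.hasDerivWithinAt
  have hinjx : InjOn (fun x : ℝ => x^2 - 1) (Ioi (1:ℝ)) := by
    intro a ha b hb h
    simp only at h
    have ha1 : (1:ℝ) < a := ha
    have hb1 : (1:ℝ) < b := hb
    nlinarith [sq_nonneg (a - b), sq_nonneg (a + b)]
  have himgx : (fun x : ℝ => x^2 - 1) '' (Ioi (1:ℝ)) = Ioi (0:ℝ) := by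
    ext y
    constructor
    · rintro ⟨x, hx, rfl⟩
      have hx1 : (1:ℝ) < x := hx
      have : (0:ℝ) < x^2 - 1 := by nlinarith
      exact this
    · intro hy
      have hy0 : (0:ℝ) < y := hy
      refine ⟨Real.sqrt (y+1), ?_, ?_⟩
      · have : Real.sqrt 1 < Real.sqrt (y+1) := Real.sqrt_lt_sqrt (by norm_num) (by linarith)
        simpa using this
      · show (Real.sqrt (y+1))^2 - 1 = y
        rw [Real.sq_sqrt (by linarith)]
        ring
  have hintX : ∀ t ∈ Ioi (0:ℝ), IntegrableOn (fun x => F t x) (Ioi (1:ℝ)) := by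
    intro t ht
    have ht0 : (0:ℝ) < t := ht
    set r : ℝ := z^2/(4*t) with hr
    have hr0 : 0 < r := by rw [hr]; positivity
    set g : ℝ → ℝ := fun u => Real.exp (-(r * (u+1))) * u ^ (ν - 1/2) / 2 with hgd
    have hgint : IntegrableOn g (Ioi (0:ℝ)) := by
      have h1 : IntegrableOn
          (fun u : ℝ => u ^ (ν+1/2-1) * Real.exp (-(r*u)) * (Real.exp (-r) / 2)) (Ioi (0:ℝ)) :=
        (rpowExpInt hν2 hr0).mul_const _
      refine h1.congr_fun (fun u hu => ?_) measurableSet_Ioi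
      rw [hgd]
      simp only
      rw [show -(r*(u+1)) = -(r*u) + -r by ring, Real.exp_add]
      rw [show ν + 1/2 - 1 = ν - 1/2 by ring]
      ring
    have h2 := (integrableOn_image_iff_integrableOn_abs_deriv_smul measurableSet_Ioi
      hderivx hinjx g).mp (by rw [himgx]; exact hgint)
    have h3 : IntegrableOn
        (fun x => |2*x| • g (x^2-1) * (Real.exp (-t) * t ^ (-(1:ℝ)/2))) (Ioi (1:ℝ)) :=
      h2.mul_const _
    refine h3.congr_fun (fun x hx => ?_) measurableSet_Ioi
    have hx1 : (1:ℝ) < x := hx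
    beta_reduce
    rw [smul_eq_mul, hgd, hFdef]
    simp only
    rw [abs_of_pos (by linarith : (0:ℝ) < 2*x)]
    rw [show x^2 - 1 + 1 = x^2 by ring]
    rw [show -t - (z*x)^2/(4*t) = -(r * x^2) + -t by rw [hr]; field_simp; ring, Real.exp_add]
    ring
  have hinnerX : ∀ t ∈ Ioi (0:ℝ), ∫ x in Ioi (1:ℝ), F t x = C2 * g2 t := by
    intro t ht
    have ht0 : (0:ℝ) < t := ht
    set r : ℝ := z^2/(4*t) with hr
    have hr0 : 0 < r := by rw [hr]; positivity
    set g : ℝ → ℝ := fun u => Real.exp (-(r * (u+1))) * u ^ (ν - 1/2) / 2 with hgd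
    have hCoV := integral_image_eq_integral_abs_deriv_smul measurableSet_Ioi hderivx hinjx g
    rw [himgx] at hCoV
    -- LHS of hCoV: ∫ g over Ioi 0
    have hval : ∫ u in Ioi (0:ℝ), g u = Real.exp (-r) / 2 * ((1/r)^(ν+1/2) * Real.Gamma (ν+1/2)) := by
      rw [← Real.integral_rpow_mul_exp_neg_mul_Ioi hν2 hr0, ← integral_const_mul]
      apply setIntegral_congr_fun measurableSet_Ioi
      intro u hu
      rw [hgd]
      simp only
      rw [show -(r*(u+1)) = -(r*u) + -r by ring, Real.exp_add]
      rw [show ν + 1/2 - 1 = ν - 1/2 by ring]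
      ring
    -- relate ∫ F t x to hCoV
    have hFx : ∫ x in Ioi (1:ℝ), F t x
        = (∫ x in Ioi (1:ℝ), |2*x| • g (x^2-1)) * (Real.exp (-t) * t ^ (-(1:ℝ)/2)) := by
      rw [← integral_mul_const]
      apply setIntegral_congr_fun measurableSet_Ioi
      intro x hx
      have hx1 : (1:ℝ) < x := hx
      show F t x = |2*x| • g (x^2-1) * (Real.exp (-t) * t ^ (-(1:ℝ)/2))
      rw [smul_eq_mul, hgd, hFdef]
      simp only
      rw [abs_of_pos (by linarith : (0:ℝ) < 2*x)]
      rw [show x^2 - 1 + 1 = x^2 by ring]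
      rw [show -t - (z*x)^2/(4*t) = -(r * x^2) + -t by rw [hr]; field_simp; ring, Real.exp_add]
      ring
    rw [hFx, ← hCoV, hval]
    -- now pure algebra with rpow
    rw [hg2, hC2]
    simp only
    have h1 : (1/r : ℝ)^(ν+1/2) = (4/z^2)^(ν+1/2) * t^(ν+1/2) := by
      rw [← Real.mul_rpow (by positivity) ht0.le]
      congr 1
      rw [hr]
      field_simp
    rw [h1]
    have h2 : Real.exp (-t) * t ^ (-(1:ℝ)/2) * t^(ν+1/2) = Real.exp (-t) * t^ν := by
      rw [mul_assoc, ← Real.rpow_add ht0]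
      norm_num
    have h3 : Real.exp (-r) * Real.exp (-t) = Real.exp (-t - z^2/(4*t)) := by
      rw [← Real.exp_add, hr]
      ring_nf
    calc Real.exp (-r) / 2 * ((4/z^2)^(ν+1/2) * t^(ν+1/2) * Real.Gamma (ν+1/2))
          * (Real.exp (-t) * t ^ (-(1:ℝ)/2))
        = Real.Gamma (ν+1/2) / 2 * (4/z^2)^(ν+1/2)
          * (Real.exp (-r) * Real.exp (-t) * (t ^ (-(1:ℝ)/2) * t^(ν+1/2))) := by ring
      _ = Real.Gamma (ν+1/2) / 2 * (4/z^2)^(ν+1/2) * (Real.exp (-t - z^2/(4*t)) * t^ν) := by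
          rw [← Real.rpow_add ht0, show (-(1:ℝ)/2 + (ν+1/2)) = ν by ring, h3]
  -- Tonelli
  have hFm : Measurable (fun p : ℝ × ℝ => F p.1 p.2) := by
    simp only [hFdef]; fun_prop
  have hswap : (∫⁻ t in Ioi (0:ℝ), ∫⁻ x in Ioi (1:ℝ), ENNReal.ofReal (F t x))
      = ∫⁻ x in Ioi (1:ℝ), ∫⁻ t in Ioi (0:ℝ), ENNReal.ofReal (F t x) :=
    lintegral_lintegral_swap ((ENNReal.measurable_ofReal.comp hFm).aemeasurable)
  have hA : ∀ x ∈ Ioi (1:ℝ), (∫⁻ t in Ioi (0:ℝ), ENNReal.ofReal (F t x))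
      = ENNReal.ofReal (Real.sqrt π * g1 x) := by
    intro x hx
    rw [← ofReal_integral_eq_lintegral_ofReal (hsubint x hx)
      ((ae_restrict_iff' measurableSet_Ioi).mpr
        (Filter.Eventually.of_forall fun t ht => hFnnx x hx t ht)), hinnerT x hx]
  have hB : ∀ t ∈ Ioi (0:ℝ), (∫⁻ x in Ioi (1:ℝ), ENNReal.ofReal (F t x))
      = ENNReal.ofReal (C2 * g2 t) := by
    intro t ht
    rw [← ofReal_integral_eq_lintegral_ofReal (hintX t ht)
      ((ae_restrict_iff' measurableSet_Ioi).mpr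
        (Filter.Eventually.of_forall fun x hx => hFnnx x hx t ht)), hinnerX t ht]
  have hg2int : IntegrableOn g2 (Ioi (0:ℝ)) := g2_integrable hz hν1
  have hg2nn : ∀ t ∈ Ioi (0:ℝ), 0 ≤ g2 t := by
    intro t ht
    have ht0 : (0:ℝ) < t := ht
    rw [hg2]
    have := Real.rpow_nonneg ht0.le ν
    positivity
  have hP : (∫⁻ x in Ioi (1:ℝ), ENNReal.ofReal (Real.sqrt π * g1 x))
      = ENNReal.ofReal (C2 * ∫ t in Ioi (0:ℝ), g2 t) := by
    calc (∫⁻ x in Ioi (1:ℝ), ENNReal.ofReal (Real.sqrt π * g1 x))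
        = ∫⁻ x in Ioi (1:ℝ), ∫⁻ t in Ioi (0:ℝ), ENNReal.ofReal (F t x) := by
          refine (setLIntegral_congr_fun measurableSet_Ioi ?_)
          exact fun x hx => (hA x hx).symm
      _ = ∫⁻ t in Ioi (0:ℝ), ∫⁻ x in Ioi (1:ℝ), ENNReal.ofReal (F t x) := hswap.symm
      _ = ∫⁻ t in Ioi (0:ℝ), ENNReal.ofReal (C2 * g2 t) := by
          refine (setLIntegral_congr_fun measurableSet_Ioi ?_)
          exact fun t ht => (hB t ht)
      _ = ENNReal.ofReal (∫ t in Ioi (0:ℝ), C2 * g2 t) :=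
          (ofReal_integral_eq_lintegral_ofReal (hg2int.const_mul C2)
            ((ae_restrict_iff' measurableSet_Ioi).mpr
              (Filter.Eventually.of_forall fun t ht => mul_nonneg hC2nn (hg2nn t ht)))).symm
      _ = ENNReal.ofReal (C2 * ∫ t in Ioi (0:ℝ), g2 t) := by rw [integral_const_mul]
  have hg1m : Measurable g1 := by simp only [hg1]; fun_prop
  have hg1nn : ∀ x ∈ Ioi (1:ℝ), 0 ≤ g1 x := by
    intro x hx
    have hx1 : (1:ℝ) < x := hx
    have h1 : (0:ℝ) ≤ x^2 - 1 := by nlinarith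
    rw [hg1]
    have := Real.rpow_nonneg h1 (ν - 1/2)
    positivity
  have hnn1 : 0 ≤ᵐ[volume.restrict (Ioi (1:ℝ))] fun x => Real.sqrt π * g1 x :=
    (ae_restrict_iff' measurableSet_Ioi).mpr
      (Filter.Eventually.of_forall fun x hx =>
        mul_nonneg (Real.sqrt_nonneg π) (hg1nn x hx))
  have hint1 : IntegrableOn (fun x => Real.sqrt π * g1 x) (Ioi (1:ℝ)) := by
    refine ⟨(hg1m.const_mul _).aestronglyMeasurable, ?_⟩
    rw [hasFiniteIntegral_iff_ofReal hnn1, hP]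
    exact ENNReal.ofReal_lt_top
  have hLeq : ∫ x in Ioi (1:ℝ), Real.sqrt π * g1 x = C2 * ∫ t in Ioi (0:ℝ), g2 t := by
    have h := ofReal_integral_eq_lintegral_ofReal hint1 hnn1
    rw [hP] at h
    refine (ENNReal.ofReal_eq_ofReal_iff ?_ ?_).mp h
    · exact setIntegral_nonneg measurableSet_Ioi fun x hx =>
        mul_nonneg (Real.sqrt_nonneg π) (hg1nn x hx)
    · exact mul_nonneg hC2nn (setIntegral_nonneg measurableSet_Ioi hg2nn)
  rw [integral_const_mul] at hLeq
  have hBval : ∫ t in Ioi (0:ℝ), g2 t = (z/2)^(ν+1) * (2 * besselK (ν+1) z) := by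
    rw [hg2, expCoV hz, coshInt (f_integrable hz hν1)]
  have hπ : (0:ℝ) < Real.sqrt π := Real.sqrt_pos.mpr Real.pi_pos
  have hb : (0:ℝ) < 2/z := by positivity
  have key : (4/z^2 : ℝ)^(ν+1/2) * (z/2)^(ν+1) = 2^ν * z^(-ν) := by
    have e1 : (4/z^2 : ℝ) = (2/z)^(2:ℕ) := by
      field_simp
      ring
    have e2 : (z/2 : ℝ) = (2/z)⁻¹ := by field_simp
    rw [e1, ← Real.rpow_natCast (2/z) 2, ← Real.rpow_mul hb.le, e2,
      Real.inv_rpow hb.le, ← Real.rpow_neg hb.le, ← Real.rpow_add hb,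
      show ((2:ℕ):ℝ)*(ν+1/2) + -(ν+1) = ν by push_cast; ring,
      Real.div_rpow (by norm_num : (0:ℝ) ≤ 2) hz.le,
      Real.rpow_neg hz.le, div_eq_mul_inv]
  have halg : C2 * ((z/2)^(ν+1) * (2 * besselK (ν+1) z))
      = Real.sqrt π * (2 ^ ν / Real.sqrt π * Real.Gamma (ν + 1/2) * z ^ (-ν) * besselK (ν + 1) z) := by
    have h1 : C2 * ((z/2)^(ν+1) * (2 * besselK (ν+1) z))
        = Real.Gamma (ν+1/2) * ((4/z^2)^(ν+1/2) * (z/2)^(ν+1)) * besselK (ν+1) z := by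
      rw [hC2]; ring
    rw [h1, key]
    have h2 : Real.sqrt π * (2^ν / Real.sqrt π * Real.Gamma (ν+1/2) * z^(-ν) * besselK (ν+1) z)
        = 2^ν * Real.Gamma (ν+1/2) * z^(-ν) * besselK (ν+1) z := by
      field_simp
    rw [h2]
    ring
  have hfin : Real.sqrt π * ∫ x in Ioi (1:ℝ), g1 x
      = Real.sqrt π * (2 ^ ν / Real.sqrt π * Real.Gamma (ν + 1/2) * z ^ (-ν) * besselK (ν + 1) z) := by
    rw [hLeq, hBval, halg]
  exact mul_left_cancel₀ hπ.ne' hfin
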